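/- Any aperiodic ergodic ℤ-process admits as a finitary factor an ℕ-valued process R = (R_n)_{n∈ℤ} such that, almost surely, R_n > 2n for infinitely many positive integers n. -/

import Mathlib

open MeasureTheory ProbabilityTheory Filter
open scoped ENNReal

namespace ZP

noncomputable section

instance optionMeasurableSpace {A : Type*} : MeasurableSpace (Option A) := ⊤

instance optionDiscrete {A : Type*} : DiscreteMeasurableSpace (Option A) :=
  inferInstanceAs (@DiscreteMeasurableSpace (Option A) ⊤)

def zshift {A : Type*} (x : ℤ → A) : ℤ → A := fun n => x (n + 1)

def IsStationary {A : Type*} [MeasurableSpace A] (μ : Measure (ℤ → A)) : Prop :=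
  Measure.map zshift μ = μ

def windowSigma (A : Type*) [m : MeasurableSpace A] (n : ℕ) : MeasurableSpace (ℤ → A) :=
  ⨆ i ∈ Finset.Icc (-(n : ℤ)) (n : ℤ), MeasurableSpace.comap (fun x : ℤ → A => x i) m

def StopFinitary {A B : Type*} [MeasurableSpace A] [MeasurableSpace B]
    (ν : Measure (ℤ → B)) (φ : (ℤ → B) → ℤ → A) : Prop :=
  ∃ τ : (ℤ → B) → ℕ∞,
    (∀ n : ℕ, MeasurableSet[windowSigma B n] {y | τ y ≤ (n : ℕ∞)}) ∧
    ν {y | τ y = ⊤} = 0 ∧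
    ∀ s : Set A, MeasurableSet s → ∀ n : ℕ,
      MeasurableSet[windowSigma B n] ({y | φ y 0 ∈ s} ∩ {y | τ y ≤ (n : ℕ∞)})

def FactorMap {A B : Type*} [MeasurableSpace A] [MeasurableSpace B] (ν : Measure (ℤ → B))
    (μ : Measure (ℤ → A)) (φ : (ℤ → B) → ℤ → A) : Prop :=
  Measurable φ ∧ (∀ᵐ y ∂ν, φ (zshift y) = zshift (φ y)) ∧ ν.map φ = μ

def FinitaryFactorMap {A B : Type*} [MeasurableSpace A] [MeasurableSpace B] (ν : Measure (ℤ → B))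
    (μ : Measure (ℤ → A)) (φ : (ℤ → B) → ℤ → A) : Prop :=
  FactorMap ν μ φ ∧ StopFinitary ν φ

def FinitarilyIsomorphic {A B : Type*} [MeasurableSpace A] [MeasurableSpace B]
    (μ : Measure (ℤ → A)) (ν : Measure (ℤ → B)) : Prop :=
  ∃ φ ψ, FinitaryFactorMap μ ν φ ∧ FinitaryFactorMap ν μ ψ ∧
    (∀ᵐ x ∂μ, ψ (φ x) = x) ∧ (∀ᵐ y ∂ν, φ (ψ y) = y)

def H {Ω S : Type*} [MeasurableSpace Ω] (μ : Measure Ω) (X : Ω → S) : ℝ≥0∞ :=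
  ∑' s : S, ENNReal.ofReal (Real.negMulLog (μ (X ⁻¹' {s})).toReal)

def blockRV {A : Type*} (n : ℕ) (x : ℤ → A) : Fin n → A := fun i => x ((i : ℤ) + 1)

def ksEntropyAux {A : Type*} [MeasurableSpace A] (μ : Measure (ℤ → A)) : ℝ≥0∞ :=
  ⨅ n : ℕ, H μ (blockRV (n + 1)) / (n + 1 : ℝ≥0∞)

def ksEntropy {A : Type*} [MeasurableSpace A] (μ : Measure (ℤ → A)) : ℝ≥0∞ :=
  ⨆ (φ : (ℤ → A) → ℤ → ℕ) (_ : Measurable φ)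
    (_ : ∀ᵐ x ∂μ, φ (zshift x) = zshift (φ x)) (_ : H (μ.map φ) (fun y => y 0) ≠ ⊤),
    ksEntropyAux (μ.map φ)

def IsIID {A : Type*} [MeasurableSpace A] (μ : Measure (ℤ → A)) : Prop :=
  iIndepFun (fun i : ℤ => fun x : ℤ → A => x i) μ ∧
  ∀ i j : ℤ, μ.map (fun x => x i) = μ.map (fun x => x j)

def KDependent {A : Type*} [MeasurableSpace A] (k : ℕ) (μ : Measure (ℤ → A)) : Prop :=
  ∀ S T : Set ℤ, (∀ a ∈ S, ∀ b ∈ T, (k : ℤ) < |a - b|) →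
    IndepFun (fun x : ℤ → A => S.restrict x) (fun x : ℤ → A => T.restrict x) μ

def Aperiodic {A : Type*} [MeasurableSpace A] (μ : Measure (ℤ → A)) : Prop :=
  ∀ᵐ x ∂μ, ∀ p : ℕ, 0 < p → ∃ n : ℤ, x (n + p) ≠ x n

/-! ### Pair (joint) processes -/

def seqFst {A B : Type*} (ω : ℤ → A × B) : ℤ → A := fun i => (ω i).1

def seqSnd {A B : Type*} (ω : ℤ → A × B) : ℤ → B := fun i => (ω i).2

/-- The joint process `μ` on the alphabet `C × B` is an independent product of an i.i.d.
process (the first component) with the process `w` (the second component). -/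
def IsIIDProdOf {C B : Type*} [MeasurableSpace C] [MeasurableSpace B]
    (μ : Measure (ℤ → C × B)) (w : Measure (ℤ → B)) : Prop :=
  IsIID (μ.map seqFst) ∧ μ.map (fun ω => (seqFst ω, seqSnd ω)) = (μ.map seqFst).prod w

/-- A finitary isomorphism between two joint processes which fixes the second (the `W`-)
component. -/
def RelFinitaryIso {A A' B : Type*} [MeasurableSpace A] [MeasurableSpace A'] [MeasurableSpace B]
    (μ : Measure (ℤ → A × B)) (ν : Measure (ℤ → A' × B)) : Prop :=
  ∃ π π', FinitaryFactorMap μ ν π ∧ FinitaryFactorMap ν μ π' ∧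
    (∀ᵐ ω ∂μ, seqSnd (π ω) = seqSnd ω ∧ π' (π ω) = ω) ∧
    (∀ᵐ ω' ∂ν, seqSnd (π' ω') = seqSnd ω' ∧ π (π' ω') = ω')

/-! ### Conditional information, entropy -/

def condInfo {α S β : Type*} [MeasurableSpace α] [MeasurableSpace S] [StandardBorelSpace S]
    [Nonempty S] [MeasurableSpace β] (μ : Measure α) [IsFiniteMeasure μ]
    (U : α → S) (V : α → β) (ω : α) : ℝ :=
  -Real.log ((condDistrib U V μ (V ω)) {U ω}).toReal

def condH {α S β : Type*} [MeasurableSpace α] [MeasurableSpace S] [StandardBorelSpace S]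
    [Nonempty S] [MeasurableSpace β] (μ : Measure α) [IsFiniteMeasure μ]
    (U : α → S) (V : α → β) : ℝ≥0∞ :=
  ∫⁻ ω, ENNReal.ofReal (condInfo μ U V ω) ∂μ

/-- Conditional Kolmogorov–Sinai entropy `h(ξ | η) = lim_n H(ξ_{[1,n]} | η)/n`
(for stationary processes the limit equals the infimum). -/
def condKS {E C D : Type*} [MeasurableSpace E] [MeasurableSpace C] [StandardBorelSpace C]
    [Nonempty C] [MeasurableSpace D] (μ : Measure (ℤ → E)) [IsFiniteMeasure μ]
    (ξ : (ℤ → E) → ℤ → C) (η : (ℤ → E) → ℤ → D) : ℝ≥0∞ :=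
  ⨅ n : ℕ, condH μ (fun ω => blockRV (n + 1) (ξ ω)) η / (n + 1 : ℝ≥0∞)

/-! ### Relative finitary dependence -/

open Classical in
/-- The restriction `x_S` of `x` to a (possibly random) subset `S ⊆ ℤ`, encoded with `none`
outside of `S`. -/
def mask {C : Type*} (S : Set ℤ) (x : ℤ → C) : ℤ → Option C :=
  fun i => if i ∈ S then some (x i) else none

/-- `ξ` is `K`-dependent relative to `η`: almost surely, `ξ_S` and `ξ_T` are conditionally
independent given `η` for any (η-measurably chosen) `S, T ⊆ ℤ` with
`|a-b| > max {K_a, K_b}` for all `a ∈ S`, `b ∈ T`. -/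
def RelKDependent {E C D : Type*} [MeasurableSpace E] [StandardBorelSpace (ℤ → E)]
    [MeasurableSpace C] [MeasurableSpace D]
    (μ : Measure (ℤ → E)) [IsFiniteMeasure μ]
    (ξ : (ℤ → E) → ℤ → C) (η : (ℤ → E) → ℤ → D) (hη : Measurable η)
    (K : (ℤ → D) → ℤ → ℕ) : Prop :=
  ∀ S T : (ℤ → D) → Set ℤ,
    (∀ i, MeasurableSet {w : ℤ → D | i ∈ S w}) →
    (∀ i, MeasurableSet {w : ℤ → D | i ∈ T w}) →
    (∀ᵐ ω ∂μ, ∀ a ∈ S (η ω), ∀ b ∈ T (η ω),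
        ((max (K (η ω) a) (K (η ω) b) : ℕ) : ℤ) < |a - b|) →
    CondIndepFun (MeasurableSpace.comap η inferInstance) hη.comap_le
      (fun ω => mask (S (η ω)) (ξ ω)) (fun ω => mask (T (η ω)) (ξ ω)) μ

/-- The block `ξ_{[n-m, n+m]}` of the process `ξ`. -/
def blockAt {E C : Type*} (ξ : (ℤ → E) → ℤ → C) (m : ℕ) (n : ℤ) (ω : ℤ → E) :
    Fin (2 * m + 1) → C :=
  fun j => ξ ω (n - (m : ℤ) + (j : ℤ))

/-- The process of conditional laws `(𝓛(ξ_{[n-m,n+m]} | η))_{n ∈ ℤ}` is a stop-finitary factor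
of `η`, for every `m`. -/
def FinCondLaws {E C D : Type*} [MeasurableSpace E] [MeasurableSpace C] [StandardBorelSpace C]
    [Nonempty C] [MeasurableSpace D] (μ : Measure (ℤ → E)) [IsFiniteMeasure μ]
    (ξ : (ℤ → E) → ℤ → C) (η : (ℤ → E) → ℤ → D) : Prop :=
  ∀ m : ℕ, ∃ ψ : (ℤ → D) → ℤ → Measure (Fin (2 * m + 1) → C),
    Measurable ψ ∧ (∀ᵐ w ∂(μ.map η), ψ (zshift w) = zshift (ψ w)) ∧
    StopFinitary (μ.map η) ψ ∧
    ∀ n : ℤ, ∀ᵐ ω ∂μ, ψ (η ω) n = condDistrib (blockAt ξ m n) η μ (η ω)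

/-- `ξ` is finitarily dependent relative to `η` (under the ambient joint law `μ`):
it is finitarily `K`-dependent relative to `η` for some `ℕ`-valued process `K` which is a
stop-finitary factor of `η`. -/
def RelFinitarilyDependent {E C D : Type*} [MeasurableSpace E] [StandardBorelSpace (ℤ → E)]
    [MeasurableSpace C] [StandardBorelSpace C] [Nonempty C] [MeasurableSpace D]
    (μ : Measure (ℤ → E)) [IsFiniteMeasure μ]
    (ξ : (ℤ → E) → ℤ → C) (η : (ℤ → E) → ℤ → D) : Prop :=
  ∃ (hη : Measurable η) (K : (ℤ → D) → ℤ → ℕ),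
    Measurable K ∧ (∀ᵐ w ∂(μ.map η), K (zshift w) = zshift (K w)) ∧
    StopFinitary (μ.map η) K ∧ RelKDependent μ ξ η hη K ∧ FinCondLaws μ ξ η

/-- `X` (the first component of the joint process `μ`) is finitarily pro-dependent relative to
`W` (the second component): there is a sequence of partial processes, each a finitary factor of
`(W, X)`, increasing to `X`, with the `n`-th one finitarily dependent relative to
`(W, X⁽¹⁾, …, X⁽ⁿ⁻¹⁾)`. -/
def RelProDependent {A B : Type*} [MeasurableSpace A] [Countable A] [DiscreteMeasurableSpace A]
    [MeasurableSpace B] [StandardBorelSpace B]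
    (μ : Measure (ℤ → A × B)) [IsFiniteMeasure μ] : Prop :=
  ∃ φ : ℕ → ((ℤ → A × B) → ℤ → Option A),
    (∀ n, Measurable (φ n) ∧ (∀ᵐ ω ∂μ, φ n (zshift ω) = zshift (φ n ω)) ∧ StopFinitary μ (φ n)) ∧
    (∀ n, ∀ᵐ ω ∂μ, ∀ i a, φ n ω i = some a → (ω i).1 = a) ∧
    (∀ n, ∀ᵐ ω ∂μ, ∀ i, φ n ω i ≠ none → φ (n + 1) ω i = φ n ω i) ∧
    (∀ᵐ ω ∂μ, ∀ i, ∃ n, φ n ω i = some ((ω i).1)) ∧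
    ∀ n, RelFinitarilyDependent μ (φ n)
      (fun ω => fun i => ((ω i).2, fun j : Fin n => φ j ω i))

/-! ### Marker processes -/

/-- A non-trivial `{0,1}`-valued process (the occurrence probability is in `(0,1)`). -/
def NontrivialMarker (ν : Measure (ℤ → Bool)) : Prop :=
  0 < ν {w | w 0 = true} ∧ ν {w | w 0 = true} < 1

/-- The restriction of the `X`-component of a joint configuration to `(-∞, m]`. -/
def leftRV {A : Type*} (m : ℤ) (ω : ℤ → A × Bool) : {i : ℤ // i ≤ m} → A :=
  fun i => (ω i).1

/-- The restriction of the `X`-component of a joint configuration to `[m, ∞)`. -/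
def rightRV {A : Type*} (m : ℤ) (ω : ℤ → A × Bool) : {i : ℤ // m ≤ i} → A :=
  fun i => (ω i).1

/-- The restriction of the marker component to `(-∞, 0]`. -/
def markerLeft {A : Type*} (ω : ℤ → A × Bool) : {i : ℤ // i ≤ (0 : ℤ)} → Bool :=
  fun i => (ω i).2

/-- The restriction of the marker component to `[0, ∞)`. -/
def markerRight {A : Type*} (ω : ℤ → A × Bool) : {i : ℤ // (0 : ℤ) ≤ i} → Bool :=
  fun i => (ω i).2

/-- The second component of the joint law `μ` is a *good marker process* for the first:
it is a marker process for `X` (a non-trivial `{0,1}`-valued finitary factor of `X`) and there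
is `m ≥ 1` such that, a.s. on the event `M₀ = 1`, the tails `X_{(-∞,-m]}` and `X_{[m,∞)}` are
conditionally independent given `M`, with conditional distributions depending only on
`M_{(-∞,0]}` and `M_{[0,∞)}` respectively. -/
def GoodMarker {A : Type*} [MeasurableSpace A] (μ : Measure (ℤ → A × Bool)) : Prop :=
  (∃ φM : (ℤ → A) → ℤ → Bool,
    FinitaryFactorMap (μ.map seqFst) (μ.map seqSnd) φM ∧
    ∀ᵐ ω ∂μ, φM (seqFst ω) = seqSnd ω) ∧
  NontrivialMarker (μ.map seqSnd) ∧
  ∃ m : ℕ, 1 ≤ m ∧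
    ∀ (U : Set ({i : ℤ // i ≤ -(m : ℤ)} → A)) (V : Set ({i : ℤ // (m : ℤ) ≤ i} → A)),
      MeasurableSet U → MeasurableSet V →
      ∀ᵐ ω ∂μ, (ω 0).2 = true →
        (μ[Set.indicator (leftRV (-(m : ℤ)) ⁻¹' U ∩ rightRV (m : ℤ) ⁻¹' V)
            (fun _ => (1 : ℝ)) | MeasurableSpace.comap seqSnd inferInstance]) ω
        = (μ[Set.indicator (leftRV (-(m : ℤ)) ⁻¹' U)
              (fun _ => (1 : ℝ)) | MeasurableSpace.comap markerLeft inferInstance]) ω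
          * (μ[Set.indicator (rightRV (m : ℤ) ⁻¹' V)
              (fun _ => (1 : ℝ)) | MeasurableSpace.comap markerRight inferInstance]) ω

/-- The first occurrence of the marker at or before `n` (the left endpoint of the marker block
of `n`). -/
def blockStart (w : ℤ → Bool) (n : ℤ) : ℤ := sSup {k : ℤ | k ≤ n ∧ w k = true}

/-- The first occurrence of the marker strictly after `n` (past the marker block of `n`). -/
def blockEnd (w : ℤ → Bool) (n : ℤ) : ℤ := sInf {k : ℤ | n < k ∧ w k = true}

/-- The interval `I^M_n` of the partition of `ℤ` induced by the occurrences of the marker `w`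
(each occurrence starts the interval to its right). -/
def blockInterval (w : ℤ → Bool) (n : ℤ) : Set ℤ := Set.Ico (blockStart w n) (blockEnd w n)

/-- `ξ` is `M`-block-dependent relative to `η` (where `M = φM ∘ η` is a marker factor of `η`):
`ξ_{I^M_0}` and `ξ_{ℤ ∖ I^M_0}` are conditionally independent given `η`. -/
def MBlockDependent {E C D : Type*} [MeasurableSpace E] [StandardBorelSpace (ℤ → E)]
    [MeasurableSpace C] [MeasurableSpace D] (μ : Measure (ℤ → E)) [IsFiniteMeasure μ]
    (ξ : (ℤ → E) → ℤ → C) (η : (ℤ → E) → ℤ → D) (hη : Measurable η)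
    (φM : (ℤ → D) → ℤ → Bool) : Prop :=
  CondIndepFun (MeasurableSpace.comap η inferInstance) hη.comap_le
    (fun ω => mask (blockInterval (φM (η ω)) 0) (ξ ω))
    (fun ω => mask (blockInterval (φM (η ω)) 0)ᶜ (ξ ω)) μ


section Statement19Aux

variable {A : Type} [MeasurableSpace A]

lemma cyl_mem_window {n : ℕ} {i : ℤ} (hi : i.natAbs ≤ n) {S : Set A} (hS : MeasurableSet S) :
    MeasurableSet[windowSigma A n] ((fun x : ℤ → A => x i) ⁻¹' S) := by
  have hmem : i ∈ Finset.Icc (-(n : ℤ)) (n : ℤ) := by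
    simp only [Finset.mem_Icc]; omega
  have h1 : MeasurableSpace.comap (fun x : ℤ → A => x i) ‹MeasurableSpace A›
      ≤ windowSigma A n :=
    le_iSup₂ (f := fun (j : ℤ) (_ : j ∈ Finset.Icc (-(n : ℤ)) (n : ℤ)) =>
      MeasurableSpace.comap (fun x : ℤ → A => x j) ‹MeasurableSpace A›) i hmem
  exact h1 _ ⟨S, hS, rfl⟩

lemma windowSigma_mono {k n : ℕ} (h : k ≤ n) : windowSigma A k ≤ windowSigma A n := by
  refine iSup₂_le fun i hi => ?_
  have hmem : i ∈ Finset.Icc (-(n : ℤ)) (n : ℤ) := by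
    simp only [Finset.mem_Icc] at hi ⊢
    omega
  exact le_iSup₂ (f := fun (j : ℤ) (_ : j ∈ Finset.Icc (-(n : ℤ)) (n : ℤ)) =>
    MeasurableSpace.comap (fun x : ℤ → A => x j) ‹MeasurableSpace A›) i hmem

lemma windowSigma_le_pi (n : ℕ) : windowSigma A n ≤ MeasurableSpace.pi := by
  refine iSup₂_le fun i _ => ?_
  exact (measurable_pi_apply i).comap_le

lemma zshift_measurable : Measurable (zshift (A := A)) :=
  measurable_pi_lambda _ fun i => measurable_pi_apply (i + 1)

lemma zshift_iterate (n : ℕ) (x : ℤ → A) (i : ℤ) : (zshift^[n] x) i = x (i + n) := by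
  induction n generalizing i with
  | zero => simp
  | succ k ih =>
    rw [Function.iterate_succ_apply']
    show (zshift^[k] x) (i + 1) = _
    rw [ih]
    congr 1
    push_cast
    ring

lemma exists_countable_generators {G : Set (ℤ → A)} (hG : MeasurableSet G) :
    ∃ (J : ℕ → ℤ) (SS : ℕ → Set A), (∀ c, MeasurableSet (SS c)) ∧
      MeasurableSet[MeasurableSpace.generateFrom
        {B : Set (ℤ → A) | ∃ c : ℕ, B = (fun x => x (J c)) ⁻¹' (SS c)}] G := by
  classical
  let P : Set (ℤ → A) → Prop := fun B =>
    ∃ (J : ℕ → ℤ) (SS : ℕ → Set A), (∀ c, MeasurableSet (SS c)) ∧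
      MeasurableSet[MeasurableSpace.generateFrom
        {B' : Set (ℤ → A) | ∃ c : ℕ, B' = (fun x => x (J c)) ⁻¹' (SS c)}] B
  let F : MeasurableSpace (ℤ → A) :=
    { MeasurableSet' := P
      measurableSet_empty := ⟨fun _ => 0, fun _ => ∅, fun _ => MeasurableSet.empty,
        @MeasurableSet.empty _ (MeasurableSpace.generateFrom _)⟩
      measurableSet_compl := by
        rintro B ⟨J, SS, hSS, hB⟩
        exact ⟨J, SS, hSS, hB.compl⟩
      measurableSet_iUnion := by
        intro f hf
        choose J SS hSS hB using hf
        refine ⟨fun c => J c.unpair.1 c.unpair.2, fun c => SS c.unpair.1 c.unpair.2,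
          fun c => hSS _ _, MeasurableSet.iUnion fun k => ?_⟩
        refine MeasurableSpace.generateFrom_mono
          (s := {B' : Set (ℤ → A) | ∃ c : ℕ, B' = (fun x => x (J k c)) ⁻¹' (SS k c)}) ?_ _ (hB k)
        rintro B' ⟨c, rfl⟩
        exact ⟨Nat.pair k c, by simp⟩ }
  have hle : (MeasurableSpace.pi : MeasurableSpace (ℤ → A)) ≤ F := by
    refine iSup_le fun i => ?_
    rintro B ⟨S, hS, rfl⟩
    exact ⟨fun _ => i, fun _ => S, fun _ => hS,
      MeasurableSpace.measurableSet_generateFrom ⟨0, rfl⟩⟩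
  exact hle G hG

lemma mem_iff_of_generators {J : ℕ → ℤ} {SS : ℕ → Set A} {G : Set (ℤ → A)}
    (hG : MeasurableSet[MeasurableSpace.generateFrom
      {B : Set (ℤ → A) | ∃ c : ℕ, B = (fun x => x (J c)) ⁻¹' (SS c)}] G)
    {z y : ℤ → A} (h : ∀ c, y (J c) ∈ SS c ↔ z (J c) ∈ SS c) : y ∈ G ↔ z ∈ G := by
  let F : MeasurableSpace (ℤ → A) :=
    { MeasurableSet' := fun B => (y ∈ B ↔ z ∈ B)
      measurableSet_empty := by simp
      measurableSet_compl := by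
        intro B hB
        simp only [Set.mem_compl_iff]
        exact not_congr hB
      measurableSet_iUnion := by
        intro f hf
        simp only [Set.mem_iUnion]
        exact exists_congr hf }
  have hle : MeasurableSpace.generateFrom
      {B : Set (ℤ → A) | ∃ c : ℕ, B = (fun x => x (J c)) ⁻¹' (SS c)} ≤ F :=
    MeasurableSpace.generateFrom_le (by rintro B ⟨c, rfl⟩; exact h c)
  exact hle G hG

lemma no_atoms (μ : Measure (ℤ → A)) [IsProbabilityMeasure μ]
    (herg : Ergodic (zshift (A := A)) μ) (haper : Aperiodic μ)
    {E : Set (ℤ → A)} (hE : MeasurableSet E) (hpos : 0 < μ E)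
    (hatom : ∀ S : Set (ℤ → A), MeasurableSet S → μ (S ∩ E) = 0 ∨ μ (S ∩ E) = μ E) :
    False := by
  classical
  have hmp : MeasurePreserving (zshift (A := A)) μ μ := herg.toMeasurePreserving
  have hEn : ∀ n : ℕ, μ ((zshift (A := A))^[n] ⁻¹' E) = μ E := fun n =>
    (hmp.iterate n).measure_preimage hE.nullMeasurableSet
  -- Step 1 : exists p ≥ 1 with (zshift^[p]) ⁻¹' E =ᵐ[μ] E
  obtain ⟨p, hp1, hper⟩ : ∃ p : ℕ, 1 ≤ p ∧ (zshift (A := A))^[p] ⁻¹' E =ᵐ[μ] E := by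
    set U : Set (ℤ → A) := ⋃ k : ℕ, (zshift (A := A))^[k + 1] ⁻¹' E with hUdef
    have hUmeas : MeasurableSet U :=
      MeasurableSet.iUnion fun k => hE.preimage (hmp.iterate (k + 1)).measurable
    have hsub : zshift (A := A) ⁻¹' U ⊆ U := by
      rw [hUdef, Set.preimage_iUnion]
      refine Set.iUnion_subset fun k => ?_
      have heq : zshift (A := A) ⁻¹' ((zshift (A := A))^[k + 1] ⁻¹' E)
          = (zshift (A := A))^[k + 2] ⁻¹' E := by
        rw [← Set.preimage_comp, ← Function.iterate_succ]
      rw [heq]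
      exact Set.subset_iUnion (fun k : ℕ => (zshift (A := A))^[k + 1] ⁻¹' E) (k + 1)
    have h01 := herg.ae_empty_or_univ_of_preimage_ae_le' hUmeas.nullMeasurableSet
      (HasSubset.Subset.eventuallyLE hsub) (measure_ne_top μ U)
    have hUpos : 0 < μ U := by
      have h2 : (0 : ℝ≥0∞) < μ ((zshift (A := A))^[0 + 1] ⁻¹' E) := by rw [hEn 1]; exact hpos
      refine lt_of_lt_of_le h2 (measure_mono ?_)
      rw [hUdef]
      exact Set.subset_iUnion (fun k : ℕ => (zshift (A := A))^[k + 1] ⁻¹' E) 0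
    rcases h01 with h0 | huniv
    · rw [measure_congr h0, measure_empty] at hUpos
      exact absurd hUpos (lt_irrefl _)
    · have hcompl : μ Uᶜ = 0 := ae_eq_univ.mp huniv
      have hdiffnull : μ (E \ U) = 0 :=
        measure_mono_null (fun x hx => hx.2) hcompl
      have hEU : μ (E ∩ U) = μ E := by
        have h2 := measure_inter_add_diff E hUmeas (μ := μ)
        rw [hdiffnull, add_zero] at h2
        exact h2
      have hex : ∃ k : ℕ, μ (E ∩ ((zshift (A := A))^[k + 1] ⁻¹' E)) ≠ 0 := by
        by_contra hall
        push_neg at hall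
        have h3 : μ (⋃ k : ℕ, E ∩ ((zshift (A := A))^[k + 1] ⁻¹' E)) = 0 :=
          measure_iUnion_null hall
        rw [← Set.inter_iUnion, ← hUdef] at h3
        rw [h3] at hEU
        exact absurd hEU.symm hpos.ne'
      obtain ⟨k, hk⟩ := hex
      have hSmeas : MeasurableSet ((zshift (A := A))^[k + 1] ⁻¹' E) :=
        hE.preimage (hmp.iterate _).measurable
      have h4 : μ (((zshift (A := A))^[k + 1] ⁻¹' E) ∩ E) = μ E := by
        rcases hatom _ hSmeas with h | h
        · rw [Set.inter_comm] at h
          exact absurd h hk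
        · exact h
      refine ⟨k + 1, Nat.succ_le_succ (Nat.zero_le k), ?_⟩
      rw [ae_eq_set]
      constructor
      · have h5 := measure_diff_add_inter ((zshift (A := A))^[k + 1] ⁻¹' E) hE (μ := μ)
        rw [h4, hEn (k + 1)] at h5
        nth_rewrite 2 [← zero_add (μ E)] at h5
        exact (ENNReal.add_left_inj (measure_ne_top μ E)).mp h5
      · have h6 := measure_diff_add_inter E hSmeas (μ := μ)
        rw [Set.inter_comm E, h4] at h6
        nth_rewrite 2 [← zero_add (μ E)] at h6
        exact (ENNReal.add_left_inj (measure_ne_top μ E)).mp h6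
  -- Step 2 : aperiodicity gives a measurable null superset of the periodic points
  have haperset : μ {x : ℤ → A | ∃ q : ℕ, 0 < q ∧ ∀ n : ℤ, x (n + q) = x n} = 0 := by
    have h := haper
    rw [Aperiodic, ae_iff] at h
    have hseteq : {x : ℤ → A | ∃ q : ℕ, 0 < q ∧ ∀ n : ℤ, x (n + q) = x n}
        = {x : ℤ → A | ¬ ∀ p : ℕ, 0 < p → ∃ n : ℤ, x (n + p) ≠ x n} := by
      ext x
      simp only [Set.mem_setOf_eq]
      push_neg
      rfl
    rw [hseteq]
    exact h
  obtain ⟨N, hsubN, hNmeas, hNnull⟩ := exists_measurable_superset_of_null haperset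
  set G := Nᶜ with hGdef
  have hGmeas : MeasurableSet G := hNmeas.compl
  obtain ⟨J, SS, hSS, hGgen⟩ := exists_countable_generators hGmeas
  -- epsilon pattern
  set ε : ℤ → ℕ → Prop := fun j c => μ (((fun x : ℤ → A => x j) ⁻¹' (SS c)) ∩ E) = μ E with hεdef
  have hcylmeas : ∀ (j : ℤ) (c : ℕ), MeasurableSet ((fun x : ℤ → A => x j) ⁻¹' (SS c)) :=
    fun j c => (hSS c).preimage (measurable_pi_apply j)
  have hpieceEqPos : ∀ (j : ℤ) (c : ℕ), ε j c →
      {x : ℤ → A | x j ∈ SS c ↔ ε j c} = (fun x : ℤ → A => x j) ⁻¹' (SS c) := by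
    intro j c hq
    ext x
    simp [iff_true_intro hq]
  have hpieceEqNeg : ∀ (j : ℤ) (c : ℕ), ¬ ε j c →
      {x : ℤ → A | x j ∈ SS c ↔ ε j c} = ((fun x : ℤ → A => x j) ⁻¹' (SS c))ᶜ := by
    intro j c hq
    ext x
    simp [iff_false_intro hq]
  have hpiecemeas : ∀ q : ℕ × ℤ, MeasurableSet {x : ℤ → A | x q.2 ∈ SS q.1 ↔ ε q.2 q.1} := by
    intro q
    by_cases hq : ε q.2 q.1
    · rw [hpieceEqPos _ _ hq]; exact hcylmeas q.2 q.1
    · rw [hpieceEqNeg _ _ hq]; exact (hcylmeas q.2 q.1).compl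
  set Good : Set (ℤ → A) := ⋂ q : ℕ × ℤ, {x : ℤ → A | x q.2 ∈ SS q.1 ↔ ε q.2 q.1} with hGooddef
  have hGoodmeas : MeasurableSet Good := MeasurableSet.iInter hpiecemeas
  have hGoodRel : μ (E \ Good) = 0 := by
    have hsub2 : E \ Good ⊆ ⋃ q : ℕ × ℤ, E \ {x : ℤ → A | x q.2 ∈ SS q.1 ↔ ε q.2 q.1} := by
      rw [hGooddef, Set.diff_iInter]
    refine measure_mono_null hsub2 (measure_iUnion_null fun q => ?_)
    by_cases hq : ε q.2 q.1
    · rw [hpieceEqPos _ _ hq]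
      have h5 := measure_diff_add_inter E (hcylmeas q.2 q.1) (μ := μ)
      rw [Set.inter_comm, hq] at h5
      nth_rewrite 2 [← zero_add (μ E)] at h5
      exact (ENNReal.add_left_inj (measure_ne_top μ E)).mp h5
    · rw [hpieceEqNeg _ _ hq]
      have h6 : E \ ((fun x : ℤ → A => x q.2) ⁻¹' (SS q.1))ᶜ
          = ((fun x : ℤ → A => x q.2) ⁻¹' (SS q.1)) ∩ E := by
        rw [Set.diff_compl, Set.inter_comm]
      rw [h6]
      rcases hatom _ (hcylmeas q.2 q.1) with h | h
      · exact h
      · exact absurd h hq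
  have hGRel : μ (E \ G) = 0 := by
    refine measure_mono_null ?_ hNnull
    intro x hx
    have := hx.2
    rw [hGdef] at this
    simpa using this
  -- pick z
  have hz : (E ∩ (Good ∩ G)).Nonempty := by
    refine nonempty_of_measure_ne_zero (μ := μ) (s := E ∩ (Good ∩ G)) ?_
    have hd : μ (E \ (Good ∩ G)) = 0 := by
      refine measure_mono_null ?_ (measure_union_null hGoodRel hGRel)
      rw [Set.diff_inter]
    have h7 := measure_inter_add_diff E (hGoodmeas.inter hGmeas) (μ := μ)
    rw [hd, add_zero] at h7
    rw [h7]
    exact hpos.ne'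
  obtain ⟨z, hzE, hzGood, hzG⟩ := hz
  -- eps periodicity
  have epsP : ∀ (j : ℤ) (c : ℕ), (ε (j + (p : ℤ)) c ↔ ε j c) := by
    intro j c
    have hcylshift : ((fun x : ℤ → A => x (j + (p : ℤ))) ⁻¹' (SS c))
        = (zshift (A := A))^[p] ⁻¹' ((fun x : ℤ → A => x j) ⁻¹' (SS c)) := by
      ext x
      simp [Set.mem_preimage, zshift_iterate]
    have h8 : μ (((fun x : ℤ → A => x (j + (p : ℤ))) ⁻¹' (SS c)) ∩ E)
        = μ (((fun x : ℤ → A => x j) ⁻¹' (SS c)) ∩ E) := by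
      rw [hcylshift]
      calc μ ((zshift (A := A))^[p] ⁻¹' ((fun x : ℤ → A => x j) ⁻¹' (SS c)) ∩ E)
          = μ ((zshift (A := A))^[p] ⁻¹' ((fun x : ℤ → A => x j) ⁻¹' (SS c))
              ∩ (zshift (A := A))^[p] ⁻¹' E) :=
            measure_congr (ae_eq_set_inter (ae_eq_refl _) hper.symm)
        _ = μ ((zshift (A := A))^[p] ⁻¹' (((fun x : ℤ → A => x j) ⁻¹' (SS c)) ∩ E)) := by
            rw [Set.preimage_inter]
        _ = μ (((fun x : ℤ → A => x j) ⁻¹' (SS c)) ∩ E) :=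
            (hmp.iterate p).measure_preimage ((hcylmeas j c).inter hE).nullMeasurableSet
    rw [hεdef]
    simp only
    rw [h8]
  have epsAdd : ∀ (k : ℤ) (j : ℤ) (c : ℕ), (ε (j + (p : ℤ) * k) c ↔ ε j c) := by
    intro k j c
    induction k using Int.induction_on with
    | zero => simp
    | succ k ih =>
      have h1 : j + (p : ℤ) * ((k : ℤ) + 1) = (j + (p : ℤ) * k) + p := by ring
      rw [h1, epsP, ih]
    | pred k ih =>
      have h1 : (j + (p : ℤ) * (-(k : ℤ) - 1)) + p = j + (p : ℤ) * (-(k : ℤ)) := by ring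
      have h2 := epsP (j + (p : ℤ) * (-(k : ℤ) - 1)) c
      rw [h1] at h2
      exact h2.symm.trans ih
  have epsMod : ∀ (j : ℤ) (c : ℕ), (ε (j % (p : ℤ)) c ↔ ε j c) := by
    intro j c
    have h1 : j % (p : ℤ) + (p : ℤ) * (j / (p : ℤ)) = j := Int.emod_add_mul_ediv j (p : ℤ)
    have h2 := epsAdd (j / (p : ℤ)) (j % (p : ℤ)) c
    rw [h1] at h2
    exact h2.symm
  -- the periodic point
  set y : ℤ → A := fun i => z (i % (p : ℤ)) with hydef
  have hzpat : ∀ (j : ℤ) (c : ℕ), ((z j ∈ SS c) ↔ ε j c) := by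
    intro j c
    exact Set.mem_iInter.mp hzGood (c, j)
  have hy_iff : ∀ c, y (J c) ∈ SS c ↔ z (J c) ∈ SS c := by
    intro c
    have h1 : y (J c) = z (J c % (p : ℤ)) := rfl
    rw [h1]
    exact (hzpat _ c).trans ((epsMod (J c) c).trans (hzpat _ c).symm)
  have hyG : y ∈ G := (mem_iff_of_generators hGgen hy_iff).mpr hzG
  have hyper : y ∈ {x : ℤ → A | ∃ q : ℕ, 0 < q ∧ ∀ n : ℤ, x (n + q) = x n} := by
    refine ⟨p, hp1, fun n => ?_⟩
    rw [hydef]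
    simp only
    congr 1
    rw [show n + (p : ℤ) = n + (p : ℤ) * 1 by ring, Int.add_mul_emod_self_left]
  exact hyG (hsubN hyper)

lemma exists_proper_subset (μ : Measure (ℤ → A)) [IsProbabilityMeasure μ]
    (herg : Ergodic (zshift (A := A)) μ) (haper : Aperiodic μ)
    {m₀ : ℕ} {E : Set (ℤ → A)} (hE : MeasurableSet[windowSigma A m₀] E) (hpos : 0 < μ E) :
    ∃ (m : ℕ) (S : Set (ℤ → A)), MeasurableSet[windowSigma A m] S ∧ S ⊆ E ∧
      0 < μ S ∧ μ S < μ E := by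
  classical
  by_contra hno
  push_neg at hno
  have hEpi : MeasurableSet E := windowSigma_le_pi m₀ E hE
  have key : ∀ (m : ℕ) (S : Set (ℤ → A)), MeasurableSet[windowSigma A m] S → S ⊆ E →
      μ S = 0 ∨ μ S = μ E := by
    intro m S hS hsub
    rcases eq_or_ne (μ S) 0 with h | h
    · exact Or.inl h
    · exact Or.inr (le_antisymm (measure_mono hsub)
        (hno m S hS hsub (pos_iff_ne_zero.mpr h)))
  let F : MeasurableSpace (ℤ → A) :=
    { MeasurableSet' := fun S => MeasurableSet S ∧ (μ (S ∩ E) = 0 ∨ μ (S ∩ E) = μ E)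
      measurableSet_empty := ⟨MeasurableSet.empty, Or.inl (by simp)⟩
      measurableSet_compl := by
        rintro S ⟨hS, hS01⟩
        refine ⟨hS.compl, ?_⟩
        have h1 := measure_inter_add_diff E hS (μ := μ)
        have h2 : Sᶜ ∩ E = E \ S := by
          rw [Set.diff_eq, Set.inter_comm]
        rw [h2]
        rcases hS01 with h | h
        · right
          rw [Set.inter_comm] at h
          rw [h, zero_add] at h1
          exact h1
        · left
          rw [Set.inter_comm] at h
          rw [h] at h1
          nth_rewrite 2 [← add_zero (μ E)] at h1
          exact (ENNReal.add_right_inj (measure_ne_top μ E)).mp h1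
      measurableSet_iUnion := by
        rintro f hf
        refine ⟨MeasurableSet.iUnion fun i => (hf i).1, ?_⟩
        by_cases hall : ∀ i, μ (f i ∩ E) = 0
        · left
          refine measure_mono_null ?_ (measure_iUnion_null hall)
          rw [Set.iUnion_inter]
        · right
          push_neg at hall
          obtain ⟨i, hi⟩ := hall
          rcases (hf i).2 with h | h
          · exact absurd h hi
          · refine le_antisymm (measure_mono Set.inter_subset_right) ?_
            rw [← h]
            exact measure_mono (Set.inter_subset_inter_left _ (Set.subset_iUnion f i)) }
  have hleF : (MeasurableSpace.pi : MeasurableSpace (ℤ → A)) ≤ F := by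
    refine iSup_le fun i => ?_
    rintro B ⟨S, hS, rfl⟩
    refine ⟨hS.preimage (measurable_pi_apply i), ?_⟩
    have hcylW : MeasurableSet[windowSigma A i.natAbs] ((fun x : ℤ → A => x i) ⁻¹' S) :=
      cyl_mem_window le_rfl hS
    have hD : MeasurableSet[windowSigma A (max i.natAbs m₀)]
        (((fun x : ℤ → A => x i) ⁻¹' S) ∩ E) :=
      MeasurableSet.inter (windowSigma_mono (le_max_left _ _) _ hcylW)
        (windowSigma_mono (le_max_right _ _) _ hE)
    exact key _ _ hD Set.inter_subset_right
  exact no_atoms μ herg haper hEpi hpos fun S hS => (hleF S hS).2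

lemma exists_half (μ : Measure (ℤ → A)) [IsProbabilityMeasure μ]
    (herg : Ergodic (zshift (A := A)) μ) (haper : Aperiodic μ)
    {m₀ : ℕ} {E : Set (ℤ → A)} (hE : MeasurableSet[windowSigma A m₀] E) (hpos : 0 < μ E) :
    ∃ (m : ℕ) (S : Set (ℤ → A)), m₀ < m ∧ MeasurableSet[windowSigma A m] S ∧ S ⊆ E ∧
      0 < μ S ∧ 2 * μ S ≤ μ E := by
  obtain ⟨m₁, S₀, hS₀, hsub, hpos0, hlt⟩ := exists_proper_subset μ herg haper hE hpos
  set m := max m₁ m₀ + 1 with hmdef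
  have hm₀ : m₀ < m := Nat.lt_succ_of_le (le_max_right _ _)
  have hS₀m : MeasurableSet[windowSigma A m] S₀ :=
    windowSigma_mono ((le_max_left _ _).trans (Nat.le_succ _)) _ hS₀
  have hEm : MeasurableSet[windowSigma A m] E :=
    windowSigma_mono ((le_max_right _ _).trans (Nat.le_succ _)) _ hE
  have hsplit : μ S₀ + μ (E \ S₀) = μ E := by
    have h := measure_inter_add_diff E (windowSigma_le_pi m₁ _ hS₀) (μ := μ)
    rwa [Set.inter_eq_right.mpr hsub] at h
  by_cases h2 : 2 * μ S₀ ≤ μ E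
  · exact ⟨m, S₀, hm₀, hS₀m, hsub, hpos0, h2⟩
  · refine ⟨m, E \ S₀, hm₀, hEm.diff hS₀m, Set.diff_subset, ?_, ?_⟩
    · rw [pos_iff_ne_zero]
      intro hzero
      rw [hzero, add_zero] at hsplit
      exact absurd hsplit (ne_of_lt hlt)
    · by_contra hgt
      push_neg at hgt
      push_neg at h2
      have hlt2 := ENNReal.add_lt_add h2 hgt
      rw [← mul_add, hsplit, two_mul] at hlt2
      exact lt_irrefl _ hlt2

lemma zpchain (μ : Measure (ℤ → A)) [IsProbabilityMeasure μ]
    (herg : Ergodic (zshift (A := A)) μ) (haper : Aperiodic μ) :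
    ∃ (w : ℕ → ℕ) (E : ℕ → Set (ℤ → A)), StrictMono w ∧ E 0 = Set.univ ∧
      (∀ n, MeasurableSet[windowSigma A (w n)] (E n)) ∧ (∀ n, E (n + 1) ⊆ E n) ∧
      (∀ n, 0 < μ (E n)) ∧ (∀ n, μ (E n) ≤ ((1 : ℝ≥0∞) / 2) ^ n) := by
  classical
  set P : ℕ × Set (ℤ → A) → Prop :=
    fun q => MeasurableSet[windowSigma A q.1] q.2 ∧ 0 < μ q.2 with hPdef
  have step : ∀ q : ℕ × Set (ℤ → A), P q → ∃ q' : ℕ × Set (ℤ → A), P q' ∧ q.1 < q'.1 ∧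
      q'.2 ⊆ q.2 ∧ 2 * μ q'.2 ≤ μ q.2 := by
    rintro ⟨m, E⟩ ⟨hm, hE⟩
    obtain ⟨m', S, hmm, hS, hsub, hSpos, hhalf⟩ := exists_half μ herg haper hm hE
    exact ⟨(m', S), ⟨hS, hSpos⟩, hmm, hsub, hhalf⟩
  let g : {q : ℕ × Set (ℤ → A) // P q} → {q : ℕ × Set (ℤ → A) // P q} :=
    fun q => ⟨Classical.choose (step q.1 q.2), (Classical.choose_spec (step q.1 q.2)).1⟩
  have hg : ∀ q : {q : ℕ × Set (ℤ → A) // P q},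
      q.1.1 < (g q).1.1 ∧ (g q).1.2 ⊆ q.1.2 ∧ 2 * μ (g q).1.2 ≤ μ q.1.2 :=
    fun q => (Classical.choose_spec (step q.1 q.2)).2
  have hP0 : P (0, Set.univ) := by
    constructor
    · exact MeasurableSet.univ
    · simp
  let f : ℕ → {q : ℕ × Set (ℤ → A) // P q} := fun n => g^[n] ⟨(0, Set.univ), hP0⟩
  have hfsucc : ∀ n, f (n + 1) = g (f n) := fun n => Function.iterate_succ_apply' g n _
  refine ⟨fun n => (f n).1.1, fun n => (f n).1.2, ?_, rfl, fun n => (f n).2.1, ?_,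
    fun n => (f n).2.2, ?_⟩
  · refine strictMono_nat_of_lt_succ fun n => ?_
    rw [hfsucc n]
    exact (hg (f n)).1
  · intro n
    show (f (n + 1)).1.2 ⊆ (f n).1.2
    rw [hfsucc n]
    exact (hg (f n)).2.1
  · intro n
    show μ (f n).1.2 ≤ ((1 : ℝ≥0∞) / 2) ^ n
    induction n with
    | zero =>
      rw [pow_zero]
      exact le_trans (measure_mono (Set.subset_univ _)) (le_of_eq measure_univ)
    | succ k ih =>
      have h1 : 2 * μ (f (k + 1)).1.2 ≤ μ (f k).1.2 := by
        rw [hfsucc k]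
        exact (hg (f k)).2.2
      have h2 : 2 * μ (f (k + 1)).1.2 ≤ ((1 : ℝ≥0∞) / 2) ^ k := le_trans h1 ih
      have h3 : μ (f (k + 1)).1.2 ≤ ((1 : ℝ≥0∞) / 2) ^ k / 2 := by
        rw [ENNReal.le_div_iff_mul_le (Or.inl two_ne_zero) (Or.inl ENNReal.ofNat_ne_top)]
        rwa [mul_comm]
      have h4 : ((1 : ℝ≥0∞) / 2) ^ (k + 1) = ((1 : ℝ≥0∞) / 2) ^ k / 2 := by
        rw [pow_succ, one_div, div_eq_mul_inv]
      rw [h4]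
      exact h3

end Statement19Aux

/-- Any aperiodic ergodic `ℤ`-process admits as a finitary factor an
`ℕ`-valued process `R` such that, almost surely, `R_n > 2n` for infinitely many positive `n`. -/
theorem exists_finitary_factor_large_infinitely_often
    {A : Type} [MeasurableSpace A] (μ : Measure (ℤ → A)) [IsProbabilityMeasure μ]
    (hstat : IsStationary μ) (herg : Ergodic (zshift (A := A)) μ) (haper : Aperiodic μ) :
    ∃ R : (ℤ → A) → ℤ → ℕ,
      FinitaryFactorMap μ (μ.map R) R ∧
      ∀ᵐ x ∂μ, ∀ N : ℕ, ∃ n : ℕ, N ≤ n ∧ 0 < n ∧ 2 * n < R x (n : ℤ) := by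
  classical
  obtain ⟨w, E, hwmono, hE0, hEmeas, hEstep, hEpos, hEsmall⟩ := zpchain μ herg haper
  have hmp : MeasurePreserving (zshift (A := A)) μ μ := herg.toMeasurePreserving
  have hwn : ∀ n, n ≤ w n := fun n => hwmono.le_apply
  have hEanti : Antitone E := antitone_nat_of_succ_le hEstep
  have hEpi : ∀ n, MeasurableSet (E n) := fun n => windowSigma_le_pi _ _ (hEmeas n)
  -- the stopping time
  set τ : (ℤ → A) → ℕ∞ :=
    fun y => if h : ∃ n, y ∉ E n then ((w (Nat.find h) : ℕ) : ℕ∞) else ⊤ with hτdef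
  have hfind_pos : ∀ {y : ℤ → A} (h : ∃ n, y ∉ E n), 0 < Nat.find h := by
    intro y h
    rcases Nat.eq_zero_or_pos (Nat.find h) with h0 | h0
    · exfalso
      have := Nat.find_spec h
      rw [h0, hE0] at this
      exact this (Set.mem_univ y)
    · exact h0
  have hτle : ∀ (y : ℤ → A) (m : ℕ), (τ y ≤ (m : ℕ∞) ↔ ∃ n, w n ≤ m ∧ y ∉ E n) := by
    intro y m
    rw [hτdef]
    simp only
    split_ifs with h
    · rw [Nat.cast_le]
      constructor
      · intro hle
        exact ⟨Nat.find h, hle, Nat.find_spec h⟩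
      · rintro ⟨n, hn, hyn⟩
        exact le_trans (hwmono.monotone (Nat.find_min' h hyn)) hn
    · constructor
      · intro hle
        exact absurd hle (by simp)
      · rintro ⟨n, hn, hyn⟩
        push_neg at h
        exact absurd (h n) hyn
  have hτvalue : ∀ (y : ℤ → A) (m : ℕ), τ y ≤ (m : ℕ∞) →
      ∃ k, 1 ≤ k ∧ w k ≤ m ∧ τ y = ((w k : ℕ) : ℕ∞) := by
    intro y m hle
    have hex : ∃ n, y ∉ E n := by
      obtain ⟨n, _, hyn⟩ := (hτle y m).mp hle
      exact ⟨n, hyn⟩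
    refine ⟨Nat.find hex, hfind_pos hex, ?_, ?_⟩
    · have h1 : τ y = ((w (Nat.find hex) : ℕ) : ℕ∞) := by
        rw [hτdef]
        simp only
        rw [dif_pos hex]
      rw [h1] at hle
      exact_mod_cast hle
    · rw [hτdef]
      simp only
      rw [dif_pos hex]
  have hτdiff : ∀ (y : ℤ → A) (k : ℕ), 1 ≤ k →
      (τ y = ((w k : ℕ) : ℕ∞) ↔
        (τ y ≤ ((w k : ℕ) : ℕ∞) ∧ ¬ τ y ≤ ((w k - 1 : ℕ) : ℕ∞))) := by
    intro y k hk
    have hwk1 : 1 ≤ w k := le_trans (le_trans hk (hwn k)) le_rfl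
    constructor
    · intro heq
      refine ⟨le_of_eq heq,fun hle => ?_⟩
      obtain ⟨n, hn, hyn⟩ := (hτle y (w k - 1)).mp hle
      have h2 : τ y ≤ ((w k - 1 : ℕ) : ℕ∞) := (hτle y _).mpr ⟨n, hn, hyn⟩
      rw [heq, Nat.cast_le] at h2
      omega
    · rintro ⟨hle, hnle⟩
      obtain ⟨j, hj1, hjw, hjval⟩ := hτvalue y (w k) hle
      rw [hjval]
      norm_cast
      by_contra hne
      have hjlt : w j < w k := lt_of_le_of_ne hjw hne
      have : τ y ≤ ((w k - 1 : ℕ) : ℕ∞) := by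
        refine (hτle y _).mpr ?_
        obtain ⟨n, hn, hyn⟩ := (hτle y (w k)).mp hle
        -- need a specific witness: use j itself
        have hj2 : τ y ≤ ((w j : ℕ) : ℕ∞) := le_of_eq hjval
        obtain ⟨n', hn', hyn'⟩ := (hτle y (w j)).mp hj2
        exact ⟨n', by omega, hyn'⟩
      exact hnle this
  have hτtop : ∀ y : ℤ → A, (τ y = ⊤ ↔ ∀ n, y ∈ E n) := by
    intro y
    rw [hτdef]
    simp only
    split_ifs with h
    · constructor
      · intro habs
        exact absurd habs (by simp)
      · intro hall
        obtain ⟨n, hn⟩ := h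
        exact absurd (hall n) hn
    · push_neg at h
      simp [h]
  have hτwindow : ∀ m : ℕ, MeasurableSet[windowSigma A m] {y | τ y ≤ (m : ℕ∞)} := by
    intro m
    have hseteq : {y : ℤ → A | τ y ≤ (m : ℕ∞)}
        = ⋃ n ∈ Finset.range (m + 1), (if w n ≤ m then (E n)ᶜ else ∅) := by
      ext y
      simp only [Set.mem_setOf_eq, Set.mem_iUnion, Finset.mem_range]
      constructor
      · intro hle
        obtain ⟨n, hn, hyn⟩ := (hτle y m).mp hle
        refine ⟨n, by have := hwn n; omega, ?_⟩
        rw [if_pos hn]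
        exact hyn
      · rintro ⟨n, hn, hyn⟩
        by_cases hc : w n ≤ m
        · rw [if_pos hc] at hyn
          exact (hτle y m).mpr ⟨n, hc, hyn⟩
        · rw [if_neg hc] at hyn
          exact absurd hyn (Set.notMem_empty y)
    rw [hseteq]
    refine Finset.measurableSet_biUnion _ fun n _ => ?_
    split_ifs with hc
    · exact MeasurableSet.compl (windowSigma_mono hc _ (hEmeas n))
    · exact @MeasurableSet.empty _ (windowSigma A m)
  have hτlepi : ∀ m : ℕ, MeasurableSet {y : ℤ → A | τ y ≤ (m : ℕ∞)} :=
    fun m => windowSigma_le_pi m _ (hτwindow m)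
  have henat : ∀ (t : ℕ∞) (n : ℕ), 1 ≤ n →
      (t = (n : ℕ∞) ↔ (t ≤ (n : ℕ∞) ∧ ¬ t ≤ ((n - 1 : ℕ) : ℕ∞))) := by
    intro t n hn
    cases t with
    | top =>
      simp only [top_le_iff]
      constructor
      · intro h
        exact absurd h.symm (by simp)
      · rintro ⟨h, _⟩
        exact absurd h (by simp)
    | coe j =>
      rw [Nat.cast_inj, Nat.cast_le, Nat.cast_le]
      omega
  have hτmeas : Measurable τ := by
    rw [ENat.measurable_iff]
    intro n
    rcases Nat.eq_zero_or_pos n with h0 | h0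
    · subst h0
      have : τ ⁻¹' {((0 : ℕ) : ℕ∞)} = {y : ℤ → A | τ y ≤ ((0 : ℕ) : ℕ∞)} := by
        ext y
        simp only [Set.mem_preimage, Set.mem_singleton_iff, Set.mem_setOf_eq, Nat.cast_zero]
        exact ⟨le_of_eq, fun h => le_antisymm h zero_le⟩
      rw [this]
      exact hτlepi 0
    · have : τ ⁻¹' {(n : ℕ∞)}
          = {y : ℤ → A | τ y ≤ (n : ℕ∞)} \ {y : ℤ → A | τ y ≤ ((n - 1 : ℕ) : ℕ∞)} := by
        ext y
        simp only [Set.mem_preimage, Set.mem_singleton_iff, Set.mem_diff, Set.mem_setOf_eq]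
        exact henat (τ y) n h0
      rw [this]
      exact (hτlepi n).diff (hτlepi (n - 1))
  have hτtopset : {y : ℤ → A | τ y = ⊤} = ⋂ n, E n := by
    ext y
    simp only [Set.mem_setOf_eq, Set.mem_iInter]
    exact hτtop y
  have hτnull : μ {y : ℤ → A | τ y = ⊤} = 0 := by
    have hb : ∀ n : ℕ, μ {y : ℤ → A | τ y = ⊤} ≤ ((1 : ℝ≥0∞) / 2) ^ n := by
      intro n
      rw [hτtopset]
      exact le_trans (measure_mono (Set.iInter_subset E n)) (hEsmall n)
    have htend : Filter.Tendsto (fun n : ℕ => ((1 : ℝ≥0∞) / 2) ^ n) Filter.atTop (nhds 0) :=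
      ENNReal.tendsto_pow_atTop_nhds_zero_of_lt_one (by norm_num)
    have := ge_of_tendsto' htend hb
    exact le_antisymm this zero_le
  have htaubig : ∀ (y : ℤ → A) (K : ℕ), y ∈ E K → ((w K : ℕ) : ℕ∞) < τ y := by
    intro y K hy
    rw [hτdef]
    simp only
    split_ifs with h
    · rw [Nat.cast_lt]
      refine hwmono ?_
      by_contra hle
      push_neg at hle
      exact (Nat.find_spec h) (hEanti hle hy)
    · exact lt_top_iff_ne_top.mpr (by simp)
  -- the Borel--Cantelli times
  have haveNext : ∀ (K L : ℕ), ∃ M : ℕ, L < M ∧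
      1 - ((1 : ℝ≥0∞) / 2) ^ K
        ≤ μ (⋃ n ∈ Finset.Icc (L + 1) M, (zshift (A := A))^[n] ⁻¹' (E K)) := by
    intro K L
    set U : Set (ℤ → A) := ⋃ k : ℕ, (zshift (A := A))^[k + (L + 1)] ⁻¹' (E K) with hUdef
    have hUmeas : MeasurableSet U :=
      MeasurableSet.iUnion fun k => (hEpi K).preimage (hmp.iterate _).measurable
    have hsub : zshift (A := A) ⁻¹' U ⊆ U := by
      rw [hUdef, Set.preimage_iUnion]
      refine Set.iUnion_subset fun k => ?_
      have heq : zshift (A := A) ⁻¹' ((zshift (A := A))^[k + (L + 1)] ⁻¹' (E K))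
          = (zshift (A := A))^[(k + 1) + (L + 1)] ⁻¹' (E K) := by
        rw [← Set.preimage_comp]
        congr 1
        rw [show (k + 1) + (L + 1) = (k + (L + 1)) + 1 by omega, Function.iterate_succ]
      rw [heq]
      exact Set.subset_iUnion (fun k : ℕ => (zshift (A := A))^[k + (L + 1)] ⁻¹' (E K)) (k + 1)
    have h01 := herg.ae_empty_or_univ_of_preimage_ae_le' hUmeas.nullMeasurableSet
      (HasSubset.Subset.eventuallyLE hsub) (measure_ne_top μ U)
    have hUone : μ U = 1 := by
      rcases h01 with h0 | h1
      · exfalso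
        have hVU : 0 < μ U := by
          have h2 : μ ((zshift (A := A))^[0 + (L + 1)] ⁻¹' (E K)) = μ (E K) :=
            (hmp.iterate _).measure_preimage (hEpi K).nullMeasurableSet
        
          refine lt_of_lt_of_le ?_ (measure_mono
            (Set.subset_iUnion (fun k : ℕ => (zshift (A := A))^[k + (L + 1)] ⁻¹' (E K)) 0))
          rw [h2]
          exact hEpos K
        rw [measure_congr h0, measure_empty] at hVU
        exact lt_irrefl _ hVU
      · rw [measure_congr h1, measure_univ]
    have hmono : Monotone (fun M : ℕ =>
        ⋃ n ∈ Finset.Icc (L + 1) M, (zshift (A := A))^[n] ⁻¹' (E K)) := by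
      intro a b hab
      refine Set.iUnion₂_subset fun n hn => ?_
      refine Set.subset_iUnion₂ (s := fun n (_ : n ∈ Finset.Icc (L + 1) b) =>
        (zshift (A := A))^[n] ⁻¹' (E K)) n ?_
      simp only [Finset.mem_Icc] at hn ⊢
      omega
    have hiUnion : (⋃ M : ℕ, ⋃ n ∈ Finset.Icc (L + 1) M, (zshift (A := A))^[n] ⁻¹' (E K))
        = U := by
      ext x
      simp only [Set.mem_iUnion, Finset.mem_Icc, hUdef]
      constructor
      · rintro ⟨M, n, ⟨h1, h2⟩, hx⟩
        refine ⟨n - (L + 1), ?_⟩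
        rwa [Nat.sub_add_cancel h1]
      · rintro ⟨k, hx⟩
        exact ⟨k + (L + 1), k + (L + 1), ⟨Nat.le_add_left _ _, le_refl _⟩, hx⟩
    have htend := tendsto_measure_iUnion_atTop (μ := μ) hmono
    rw [hiUnion, hUone] at htend
    have hlt : 1 - ((1 : ℝ≥0∞) / 2) ^ K < 1 := by
      refine ENNReal.sub_lt_self ENNReal.one_ne_top one_ne_zero ?_
      exact pow_ne_zero K (by norm_num)
    have hev := htend.eventually (eventually_ge_nhds hlt)
    obtain ⟨M, hM1, hM2⟩ := (hev.and (eventually_ge_atTop (L + 1))).exists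
    exact ⟨M, by omega, hM1⟩
  -- NN
  set NN : ℕ → ℕ := fun K =>
    Nat.rec 1 (fun K' prev => Classical.choose (haveNext (K' + 1) prev)) K with hNNdef
  have hNN0 : NN 0 = 1 := rfl
  have hNNsucc : ∀ K, NN (K + 1) = Classical.choose (haveNext (K + 1) (NN K)) := fun K => rfl
  have hNNspec : ∀ K, NN K < NN (K + 1) ∧
      1 - ((1 : ℝ≥0∞) / 2) ^ (K + 1)
        ≤ μ (⋃ n ∈ Finset.Icc (NN K + 1) (NN (K + 1)), (zshift (A := A))^[n] ⁻¹' (E (K + 1))) := by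
    intro K
    rw [hNNsucc K]
    exact Classical.choose_spec (haveNext (K + 1) (NN K))
  have hNNmono : Monotone NN := monotone_nat_of_le_succ fun K => (hNNspec K).1.le
  have hNNge : ∀ K, K + 1 ≤ NN K := by
    intro K
    induction K with
    | zero => rw [hNN0]
    | succ k ih => have := (hNNspec k).1; omega
  -- the events B K
  set B : ℕ → Set (ℤ → A) := fun K =>
    ⋃ n ∈ Finset.Icc (NN K + 1) (NN (K + 1)), (zshift (A := A))^[n] ⁻¹' (E (K + 1)) with hBdef
  have hBmeas : ∀ K, MeasurableSet (B K) := by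
    intro K
    refine Finset.measurableSet_biUnion _ fun n _ => ?_
    exact (hEpi _).preimage (hmp.iterate _).measurable
  have hBcompl : ∀ K, μ (B K)ᶜ ≤ ((1 : ℝ≥0∞) / 2) ^ (K + 1) := by
    intro K
    have h1 := (hNNspec K).2
    rw [prob_compl_eq_one_sub (hBmeas K)]
    have hle1 : ((1 : ℝ≥0∞) / 2) ^ (K + 1) ≤ 1 := pow_le_one' (by norm_num) _
    rw [tsub_le_iff_right]
    calc (1 : ℝ≥0∞) = 1 - ((1 : ℝ≥0∞) / 2) ^ (K + 1) + ((1 : ℝ≥0∞) / 2) ^ (K + 1) :=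
          (tsub_add_cancel_of_le hle1).symm
      _ ≤ μ (B K) + ((1 : ℝ≥0∞) / 2) ^ (K + 1) := by
          exact add_le_add h1 le_rfl
      _ = ((1 : ℝ≥0∞) / 2) ^ (K + 1) + μ (B K) := add_comm _ _
  have hsumB : (∑' K : ℕ, μ (B K)ᶜ) ≠ ⊤ := by
    have h1 : (∑' K : ℕ, μ (B K)ᶜ) ≤ ∑' K : ℕ, ((1 : ℝ≥0∞) / 2) ^ (K + 1) :=
      ENNReal.tsum_le_tsum hBcompl
    have h2 : (∑' K : ℕ, ((1 : ℝ≥0∞) / 2) ^ (K + 1))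
        = ((1 : ℝ≥0∞) / 2) * (1 - (1 : ℝ≥0∞) / 2)⁻¹ := ENNReal.tsum_geometric_add_one _
    refine ne_top_of_le_ne_top ?_ h1
    rw [h2]
    refine ENNReal.mul_ne_top (by norm_num) (ENNReal.inv_ne_top.mpr ?_)
    norm_num
  have hBC : ∀ᵐ x ∂μ, {K : ℕ | x ∈ (B K)ᶜ}.Finite :=
    MeasureTheory.ae_finite_setOf_mem hsumB
  -- a.s. the stopping time is finite along the forward orbit
  have hτorb : ∀ᵐ x ∂μ, ∀ n : ℕ, τ ((zshift (A := A))^[n] x) ≠ ⊤ := by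
    rw [ae_all_iff]
    intro n
    have h1 : {x : ℤ → A | ¬ τ ((zshift (A := A))^[n] x) ≠ ⊤}
        = (zshift (A := A))^[n] ⁻¹' {y : ℤ → A | τ y = ⊤} := by
      ext x
      simp [Set.mem_preimage]
    rw [ae_iff, h1, (hmp.iterate n).measure_preimage]
    · exact hτnull
    · rw [hτtopset]
      exact (MeasurableSet.iInter hEpi).nullMeasurableSet
  -- the factor map
  set cfun : ℕ∞ → ℕ :=
    fun t => Nat.findGreatest (fun K => ((w K : ℕ) : ℕ∞) < t) t.toNat with hcdef
  set gfun : ℕ∞ → ℕ := fun t => 2 * NN (cfun t) + 1 with hgdef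
  set R : (ℤ → A) → ℤ → ℕ := fun x k => gfun (τ (fun i => x (i + k))) with hRdef
  have hshiftmeas : ∀ k : ℤ, Measurable (fun x : ℤ → A => (fun i : ℤ => x (i + k))) :=
    fun k => measurable_pi_lambda _ fun i => measurable_pi_apply (i + k)
  have hgmeas : Measurable gfun := measurable_from_top
  have hRmeas : Measurable R :=
    measurable_pi_lambda _ fun k => hgmeas.comp (hτmeas.comp (hshiftmeas k))
  have hR0 : ∀ y : ℤ → A, R y 0 = gfun (τ y) := by
    intro y
    show gfun (τ (fun i => y (i + 0))) = gfun (τ y)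
    have h1 : (fun i : ℤ => y (i + 0)) = y := funext fun i => by rw [add_zero]
    rw [h1]
  have hequi : ∀ x : ℤ → A, R (zshift x) = zshift (R x) := by
    intro x
    funext k
    show gfun (τ (fun i => (zshift x) (i + k))) = gfun (τ (fun i => x (i + (k + 1))))
    have h1 : (fun i : ℤ => (zshift x) (i + k)) = (fun i : ℤ => x (i + (k + 1))) := by
      funext i
      show x (i + k + 1) = x (i + (k + 1))
      congr 1
      ring
    rw [h1]
  -- the third stop-finitary condition
  have hthird : ∀ s : Set ℕ, MeasurableSet s → ∀ n : ℕ,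
      MeasurableSet[windowSigma A n] ({y : ℤ → A | R y 0 ∈ s} ∩ {y : ℤ → A | τ y ≤ (n : ℕ∞)}) := by
    intro s _ n
    have hseteq : {y : ℤ → A | R y 0 ∈ s} ∩ {y : ℤ → A | τ y ≤ (n : ℕ∞)}
        = ⋃ k ∈ Finset.range (n + 1),
            (if 1 ≤ k ∧ w k ≤ n ∧ gfun ((w k : ℕ) : ℕ∞) ∈ s then
              ({y : ℤ → A | τ y ≤ ((w k : ℕ) : ℕ∞)}
                \ {y : ℤ → A | τ y ≤ ((w k - 1 : ℕ) : ℕ∞)})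
            else (∅ : Set (ℤ → A))) := by
      ext y
      simp only [Set.mem_inter_iff, Set.mem_setOf_eq, Set.mem_iUnion, Finset.mem_range]
      constructor
      · rintro ⟨hys, hyle⟩
        obtain ⟨k, hk1, hkw, hkval⟩ := hτvalue y n hyle
        refine ⟨k, by have := hwn k; omega, ?_⟩
        rw [if_pos ⟨hk1, hkw, by rw [← hkval]; rwa [hR0 y] at hys⟩]
        exact ((hτdiff y k hk1).mp hkval)
      · rintro ⟨k, hk, hymem⟩
        by_cases hc : 1 ≤ k ∧ w k ≤ n ∧ gfun ((w k : ℕ) : ℕ∞) ∈ s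
        · rw [if_pos hc] at hymem
          have hkval : τ y = ((w k : ℕ) : ℕ∞) := (hτdiff y k hc.1).mpr hymem
          constructor
          · rw [hR0 y, hkval]
            exact hc.2.2
          · rw [hkval]
            exact_mod_cast Nat.cast_le.mpr hc.2.1
        · rw [if_neg hc] at hymem
          exact absurd hymem (Set.notMem_empty y)
    rw [hseteq]
    refine Finset.measurableSet_biUnion _ fun k _ => ?_
    split_ifs with hc
    · exact MeasurableSet.diff
        (windowSigma_mono hc.2.1 _ (hτwindow (w k)))
        (windowSigma_mono (le_trans (Nat.sub_le _ _) hc.2.1) _ (hτwindow (w k - 1)))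
    · exact @MeasurableSet.empty _ (windowSigma A n)
  refine ⟨R, ⟨⟨hRmeas, Filter.Eventually.of_forall hequi, rfl⟩, τ, hτwindow, hτnull, hthird⟩, ?_⟩
  -- the growth property
  filter_upwards [hBC, hτorb] with x hfin htop
  intro N
  have hev : ∀ᶠ K in Filter.atTop, x ∈ B K := by
    rw [← Nat.cofinite_eq_atTop, Filter.eventually_cofinite]
    refine Set.Finite.subset hfin ?_
    intro K hK
    simpa using hK
  obtain ⟨K₀, hK₀⟩ := Filter.eventually_atTop.mp hev
  set K := max N K₀ with hKdef
  have hxB : x ∈ B K := hK₀ K (le_max_right _ _)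
  rw [hBdef] at hxB
  simp only [Set.mem_iUnion, Finset.mem_Icc] at hxB
  obtain ⟨n, ⟨hn1, hn2⟩, hxn⟩ := hxB
  have hNK : N ≤ K := le_max_left _ _
  have hKN : K + 1 ≤ NN K := hNNge K
  refine ⟨n, by omega, by omega, ?_⟩
  have hshift : (fun i : ℤ => x (i + (n : ℤ))) = (zshift (A := A))^[n] x := by
    funext i
    rw [zshift_iterate]
  have hval : R x (n : ℤ) = gfun (τ ((zshift (A := A))^[n] x)) := by
    show gfun (τ (fun i : ℤ => x (i + (n : ℤ)))) = _
    rw [hshift]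
  rw [hval]
  have httop : τ ((zshift (A := A))^[n] x) ≠ ⊤ := htop n
  have htn : (((τ ((zshift (A := A))^[n] x)).toNat : ℕ) : ℕ∞) = τ ((zshift (A := A))^[n] x) :=
    ENat.coe_toNat httop
  set tn : ℕ := (τ ((zshift (A := A))^[n] x)).toNat with htndef
  have hbig : ((w (K + 1) : ℕ) : ℕ∞) < ((tn : ℕ) : ℕ∞) := by
    rw [htn]
    exact htaubig _ _ (Set.mem_preimage.mp hxn)
  have hbig' : w (K + 1) < tn := by exact_mod_cast hbig
  have hc : K + 1 ≤ cfun (τ ((zshift (A := A))^[n] x)) := by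
    rw [← htn]
    refine Nat.le_findGreatest ?_ ?_
    · have h1 : K + 1 ≤ w (K + 1) := hwn (K + 1)
      have h2 : ((tn : ℕ) : ℕ∞).toNat = tn := by simp
      rw [h2]
      omega
    · exact_mod_cast hbig'
  have hmono2 : NN (K + 1) ≤ NN (cfun (τ ((zshift (A := A))^[n] x))) := hNNmono hc
  show 2 * n < 2 * NN (cfun (τ ((zshift (A := A))^[n] x))) + 1
  omega


end

end ZP
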